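/- Fix an integer k ≥ 1 and let p_k(m) denote the number of partitions of m into at most k parts. Then p_k(m) · k!·(k−1)! / m^{k−1} → 1 as m → ∞; that is, p_k(m) is asymptotically m^{k−1} / (k!·(k−1)!). -/

import Mathlib

/-- `p_k(m)`: the number of partitions of `m` into at most `k` parts, i.e. the number of
Young diagrams with `m` cells (the `(i+1)`-st part being `rowLen i`) whose `(k+1)`-st
part is zero. -/
noncomputable def numPartsLe (k m : ℕ) : ℕ :=
  Set.ncard {μ : YoungDiagram | μ.card = m ∧ μ.rowLen k = 0}


open Finset

-- card of antidiagonalTuple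
lemma card_adt (k n : ℕ) :
    (Finset.Nat.antidiagonalTuple k n).card = (k + n - 1).choose n := by
  classical
  have e1 : (Finset.Nat.antidiagonalTuple k n : Finset (Fin k → ℕ)) ≃ {f : Fin k → ℕ // ∑ i, f i = n} :=
    (Equiv.subtypeEquivRight (fun f => Finset.Nat.mem_antidiagonalTuple))
  have := (Sym.equivNatSumOfFintype (Fin k) n).trans e1.symm
  have h := Fintype.card_congr this
  rw [Sym.card_sym_eq_choose, Fintype.card_fin] at h
  rw [← Fintype.card_coe, ← h]

-- rowLen zero iff
lemma rowLen_eq_zero_iff {μ : YoungDiagram} {i : ℕ} : μ.rowLen i = 0 ↔ (i, 0) ∉ μ := by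
  rw [YoungDiagram.mem_iff_lt_rowLen]
  omega

lemma card_of_rowLen_zero {μ : YoungDiagram} {n : ℕ} (h : μ.rowLen n = 0) :
    μ.card = ∑ i ∈ range n, μ.rowLen i := by
  classical
  have hcells : μ.cells = (range n).biUnion μ.row := by
    ext ⟨i, j⟩
    simp only [Finset.mem_biUnion, Finset.mem_range, YoungDiagram.mem_row_iff]
    constructor
    · intro hij
      refine ⟨i, ?_, by simpa using hij, rfl⟩
      by_contra hni
      push_neg at hni
      have := μ.rowLen_anti n i hni
      rw [h] at this
      have := YoungDiagram.mem_iff_lt_rowLen.mp (by simpa using hij)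
      omega
    · rintro ⟨a, _, ha, rfl⟩
      simpa using ha
  have : μ.card = ((range n).biUnion μ.row).card := by rw [YoungDiagram.card, ← hcells]
  rw [this, Finset.card_biUnion]
  · exact Finset.sum_congr rfl fun i _ => (μ.rowLen_eq_card).symm
  · intro a _ b _ hab
    simp only [Finset.disjoint_left, YoungDiagram.mem_row_iff]
    rintro c ⟨_, rfl⟩ ⟨_, h2⟩
    exact hab h2

def A (k m : ℕ) : Finset (Fin k → ℕ) :=
  (Finset.Nat.antidiagonalTuple k m).filter (fun f => ∀ i j : Fin k, i ≤ j → f j ≤ f i)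

lemma mem_A {k m : ℕ} {f : Fin k → ℕ} :
    f ∈ A k m ↔ (∑ i, f i = m) ∧ ∀ i j : Fin k, i ≤ j → f j ≤ f i := by
  simp [A, Finset.Nat.mem_antidiagonalTuple]

lemma numPartsLe_eq_card_A (k m : ℕ) : numPartsLe k m = (A k m).card := by
  classical
  set S : Set YoungDiagram := {μ : YoungDiagram | μ.card = m ∧ μ.rowLen k = 0} with hS
  set F : YoungDiagram → (Fin k → ℕ) := fun μ i => μ.rowLen i with hF
  have hinj : Set.InjOn F S := by
    rintro μ hμ ν hν hfg
    have hall : ∀ i, μ.rowLen i = ν.rowLen i := by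
      intro i
      rcases lt_or_ge i k with hi | hi
      · exact congrFun hfg ⟨i, hi⟩
      · have h1 := μ.rowLen_anti k i hi
        have h2 := ν.rowLen_anti k i hi
        rw [hμ.2] at h1; rw [hν.2] at h2; omega
    ext ⟨i, j⟩
    rw [YoungDiagram.mem_cells, YoungDiagram.mem_cells, YoungDiagram.mem_iff_lt_rowLen,
      YoungDiagram.mem_iff_lt_rowLen, hall]
  have himg : F '' S = ↑(A k m) := by
    ext f
    rw [Finset.mem_coe, mem_A]
    simp only [Set.mem_image, Set.mem_setOf_eq]
    constructor
    · rintro ⟨μ, ⟨hcard, hk0⟩, rfl⟩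
      constructor
      · rw [← hcard, card_of_rowLen_zero hk0]
        exact Fin.sum_univ_eq_sum_range (fun i => μ.rowLen i) k
      · intro i j hij
        exact μ.rowLen_anti i j hij
    · rintro ⟨hsum, hanti⟩
      set w : List ℕ := List.ofFn f with hw
      have hws : w.SortedGE := by
        rw [hw, List.sortedGE_ofFn_iff]
        intro i j hij
        exact hanti i j hij
      refine ⟨YoungDiagram.ofRowLens w hws, ⟨?_, ?_⟩, ?_⟩
      · have hk0 : (YoungDiagram.ofRowLens w hws).rowLen k = 0 := by
          rw [rowLen_eq_zero_iff, YoungDiagram.mem_ofRowLens]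
          simp [hw]
        rw [card_of_rowLen_zero hk0, ← hsum,
          ← Fin.sum_univ_eq_sum_range (fun i => (YoungDiagram.ofRowLens w hws).rowLen i) k]
        refine Finset.sum_congr rfl fun i _ => ?_
        have hlt : (i : ℕ) < w.length := by simp [hw, i.isLt]
        have := YoungDiagram.rowLen_ofRowLens (w := w) (hw := hws) ⟨i, hlt⟩
        simpa [hw] using this
      · rw [rowLen_eq_zero_iff, YoungDiagram.mem_ofRowLens]
        simp [hw]
      · funext i
        have hlt : (i : ℕ) < w.length := by simp [hw, i.isLt]
        have := YoungDiagram.rowLen_ofRowLens (w := w) (hw := hws) ⟨i, hlt⟩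
        simpa [hw, hF] using this
  have : numPartsLe k m = S.ncard := rfl
  rw [this, ← Set.ncard_image_of_injOn hinj, himg, Set.ncard_coe_finset]

lemma lower_card (k m : ℕ) :
    (Finset.Nat.antidiagonalTuple k m).card ≤ (A k m).card * Nat.factorial k := by
  classical
  have hsub : Finset.Nat.antidiagonalTuple k m ⊆
      Finset.image (fun p : (Fin k → ℕ) × Equiv.Perm (Fin k) => p.1 ∘ p.2)
        ((A k m) ×ˢ Finset.univ) := by
    intro f hf
    rw [Finset.Nat.mem_antidiagonalTuple] at hf
    set σ : Equiv.Perm (Fin k) := Fin.revPerm.trans (Tuple.sort f) with hσ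
    have hmono := Tuple.monotone_sort f
    have hg : ∀ i j : Fin k, i ≤ j → f (σ j) ≤ f (σ i) := by
      intro i j hij
      have : Fin.rev j ≤ Fin.rev i := Fin.rev_le_rev.mpr hij
      exact hmono this
    rw [Finset.mem_image]
    refine ⟨(f ∘ σ, σ.symm), ?_, ?_⟩
    · rw [Finset.mem_product]
      refine ⟨mem_A.mpr ⟨?_, hg⟩, Finset.mem_univ _⟩
      rw [← hf]
      exact Equiv.sum_comp σ f
    · funext x
      simp
  calc (Finset.Nat.antidiagonalTuple k m).card
      ≤ (Finset.image (fun p : (Fin k → ℕ) × Equiv.Perm (Fin k) => p.1 ∘ p.2)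
        ((A k m) ×ˢ Finset.univ)).card := Finset.card_le_card hsub
    _ ≤ ((A k m) ×ˢ (Finset.univ : Finset (Equiv.Perm (Fin k)))).card :=
        Finset.card_image_le
    _ = (A k m).card * Nat.factorial k := by
        rw [Finset.card_product, Finset.card_univ, Fintype.card_perm, Fintype.card_fin]

lemma upper_card (k m : ℕ) :
    (A k m).card * Nat.factorial k ≤
      (Finset.Nat.antidiagonalTuple k (m + ∑ i : Fin k, (k - 1 - (i : ℕ)))).card := by
  classical
  set c : Fin k → ℕ := fun i => k - 1 - (i : ℕ) with hc
  set Φ : (Fin k → ℕ) × Equiv.Perm (Fin k) → (Fin k → ℕ) :=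
    fun p => (fun i => p.1 i + c i) ∘ p.2 with hΦ
  have hstrict : ∀ g : Fin k → ℕ, (∀ i j : Fin k, i ≤ j → g j ≤ g i) →
      StrictAnti (fun i => g i + c i) := by
    intro g hg i j hij
    show g j + c j < g i + c i
    have h1 : g j ≤ g i := hg i j hij.le
    have h2 : c j < c i := by
      have hj := j.isLt
      have hij' : (i : ℕ) < (j : ℕ) := hij
      simp only [hc]
      omega
    omega
  have hinj : Set.InjOn Φ ↑((A k m) ×ˢ (Finset.univ : Finset (Equiv.Perm (Fin k)))) := by
    rintro ⟨g₁, σ₁⟩ h₁ ⟨g₂, σ₂⟩ h₂ heq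
    simp only [Finset.coe_product, Set.mem_prod, Finset.mem_coe] at h₁ h₂
    have hg₁ := (mem_A.mp h₁.1).2
    have hg₂ := (mem_A.mp h₂.1).2
    have hs₁ := hstrict g₁ hg₁
    have hs₂ := hstrict g₂ hg₂
    set τ : Equiv.Perm (Fin k) := σ₁.symm.trans σ₂ with hτ
    have hcomp : (fun i => g₁ i + c i) = (fun i => g₂ i + c i) ∘ τ := by
      funext x
      have := congrFun heq (σ₁.symm x)
      simpa [hΦ, hτ] using this
    have hτmono : StrictMono ⇑τ := by
      intro i j hij
      have h1 : g₂ (τ j) + c (τ j) < g₂ (τ i) + c (τ i) := by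
        have ej := congrFun hcomp j
        have ei := congrFun hcomp i
        simp only [Function.comp] at ej ei
        rw [← ej, ← ei]
        exact hs₁ hij
      exact hs₂.lt_iff_gt.mp h1
    have hiso := Subsingleton.elim
      (StrictMono.orderIsoOfSurjective ⇑τ hτmono τ.surjective) (OrderIso.refl (Fin k))
    have hτid : ∀ x, τ x = x := fun x => DFunLike.congr_fun hiso x
    have hg : g₁ = g₂ := by
      funext x
      have hx := congrFun hcomp x
      simp only [Function.comp, hτid] at hx
      omega
    have hσ : σ₁ = σ₂ := by
      refine Equiv.ext fun y => ?_
      have h := hτid (σ₁ y)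
      simpa [hτ] using h.symm
    simp [hg, hσ]
  have himg : ∀ p ∈ (A k m) ×ˢ (Finset.univ : Finset (Equiv.Perm (Fin k))),
      Φ p ∈ Finset.Nat.antidiagonalTuple k (m + ∑ i : Fin k, c i) := by
    rintro ⟨g, σ⟩ hp
    rw [Finset.mem_product] at hp
    have hsum := (mem_A.mp hp.1).1
    rw [Finset.Nat.mem_antidiagonalTuple]
    have : ∑ i, Φ (g, σ) i = ∑ i, (g i + c i) := Equiv.sum_comp σ (fun j => g j + c j)
    rw [this, Finset.sum_add_distrib, hsum]
  calc (A k m).card * Nat.factorial k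
      = ((A k m) ×ˢ (Finset.univ : Finset (Equiv.Perm (Fin k)))).card := by
        rw [Finset.card_product, Finset.card_univ, Fintype.card_perm, Fintype.card_fin]
    _ ≤ _ := Finset.card_le_card_of_injOn Φ himg hinj

open Filter in
lemma tendsto_choose_mul_factorial_div (r c : ℕ) :
    Tendsto (fun m : ℕ => (((m + c).choose r : ℝ) * (Nat.factorial r : ℝ)) / (m : ℝ) ^ r)
      atTop (nhds 1) := by
  have hfac : ∀ i : ℕ, i ∈ Finset.range r →
      Tendsto (fun m : ℕ => ((m : ℝ) + (c : ℝ) - (i : ℝ)) / (m : ℝ)) atTop (nhds 1) := by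
    intro i _
    have h0 : Tendsto (fun m : ℕ => ((c : ℝ) - (i : ℝ)) / (m : ℝ)) atTop (nhds 0) :=
      Tendsto.div_atTop tendsto_const_nhds tendsto_natCast_atTop_atTop
    have h1 : Tendsto (fun m : ℕ => 1 + ((c : ℝ) - (i : ℝ)) / (m : ℝ)) atTop (nhds 1) := by
      simpa using h0.const_add 1
    refine h1.congr' ?_
    filter_upwards [eventually_ge_atTop 1] with m hm
    have hm0 : (m : ℝ) ≠ 0 := by positivity
    field_simp
    ring
  have hprod : Tendsto (fun m : ℕ => ∏ i ∈ Finset.range r, (((m : ℝ) + c - i) / m))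
      atTop (nhds 1) := by
    have := tendsto_finset_prod (f := fun (i : ℕ) (m : ℕ) => ((m : ℝ) + (c : ℝ) - (i : ℝ)) / (m : ℝ))
      (a := fun _ => (1 : ℝ)) (Finset.range r) hfac
    simpa using this
  refine hprod.congr' ?_
  filter_upwards [eventually_ge_atTop 1, eventually_ge_atTop r] with m hm hmr
  have hm0 : (m : ℝ) ≠ 0 := by positivity
  have hcast : (((m + c).choose r : ℝ) * (Nat.factorial r : ℝ)) =
      ∏ i ∈ Finset.range r, ((m : ℝ) + c - i) := by
    have h1 : (m + c).descFactorial r = (m + c).choose r * Nat.factorial r := by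
      rw [Nat.descFactorial_eq_factorial_mul_choose]; ring
    have h2 : ((m + c).descFactorial r : ℝ) = ∏ i ∈ Finset.range r, ((m : ℝ) + c - i) := by
      rw [Nat.descFactorial_eq_prod_range]
      push_cast
      refine Finset.prod_congr rfl fun i hi => ?_
      rw [Finset.mem_range] at hi
      rcases le_or_gt i (m + c) with h | h
      · push_cast [Nat.cast_sub h]; ring
      · omega
    rw [← h2, h1]
    push_cast
    ring
  rw [Finset.prod_div_distrib, ← hcast]
  simp [Finset.prod_const]

open Filter

/-- Fix an integer `k ≥ 1`.  Then
`p_k(m) · k!·(k−1)! / m^{k−1} → 1` as `m → ∞`; that is, the number of partitions of `m`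
into at most `k` parts is asymptotically `m^{k−1} / (k!·(k−1)!)`. -/
theorem stmt18 (k : ℕ) (hk : 1 ≤ k) :
    Filter.Tendsto
      (fun m : ℕ =>
        (numPartsLe k m : ℝ) * ((Nat.factorial k : ℝ) * (Nat.factorial (k - 1) : ℝ)) /
          (m : ℝ) ^ (k - 1))
      Filter.atTop (nhds 1) := by
  set r := k - 1 with hr
  set C := ∑ i : Fin k, (k - 1 - (i : ℕ)) with hC
  have hsymm : ∀ n : ℕ, (n + r).choose n = (n + r).choose r := by
    intro n
    have := Nat.choose_symm (Nat.le_add_right n r)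
    simpa using this.symm
  have hL : ∀ m : ℕ, (m + r).choose r ≤ numPartsLe k m * Nat.factorial k := by
    intro m
    have h1 : (Finset.Nat.antidiagonalTuple k m).card = (k + m - 1).choose m := card_adt k m
    have h2 : k + m - 1 = m + r := by omega
    calc (m + r).choose r = (m + r).choose m := (hsymm m).symm
      _ = (Finset.Nat.antidiagonalTuple k m).card := by rw [h1, h2]
      _ ≤ (A k m).card * Nat.factorial k := lower_card k m
      _ = numPartsLe k m * Nat.factorial k := by rw [numPartsLe_eq_card_A]
  have hU : ∀ m : ℕ, numPartsLe k m * Nat.factorial k ≤ (m + (C + r)).choose r := by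
    intro m
    have h1 : (Finset.Nat.antidiagonalTuple k (m + C)).card = (k + (m + C) - 1).choose (m + C) :=
      card_adt k (m + C)
    have h2 : k + (m + C) - 1 = (m + C) + r := by omega
    calc numPartsLe k m * Nat.factorial k = (A k m).card * Nat.factorial k := by
          rw [numPartsLe_eq_card_A]
      _ ≤ (Finset.Nat.antidiagonalTuple k (m + C)).card := upper_card k m
      _ = ((m + C) + r).choose (m + C) := by rw [h1, h2]
      _ = ((m + C) + r).choose r := hsymm (m + C)
      _ = (m + (C + r)).choose r := by rw [add_assoc]
  have hLtend := tendsto_choose_mul_factorial_div r r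
  have hUtend := tendsto_choose_mul_factorial_div r (C + r)
  refine tendsto_of_tendsto_of_tendsto_of_le_of_le' hLtend hUtend ?_ ?_
  · filter_upwards [eventually_ge_atTop 1] with m hm
    have hpow : (0 : ℝ) < (m : ℝ) ^ r := by positivity
    rw [div_le_div_iff_of_pos_right hpow]
    calc ((m + r).choose r : ℝ) * (Nat.factorial r : ℝ)
        ≤ ((numPartsLe k m * Nat.factorial k : ℕ) : ℝ) * (Nat.factorial r : ℝ) := by
          have := Nat.cast_le (α := ℝ) |>.mpr (hL m)
          exact mul_le_mul_of_nonneg_right this (by positivity)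
      _ = (numPartsLe k m : ℝ) * ((Nat.factorial k : ℝ) * (Nat.factorial r : ℝ)) := by
          push_cast; ring
  · filter_upwards [eventually_ge_atTop 1] with m hm
    have hpow : (0 : ℝ) < (m : ℝ) ^ r := by positivity
    rw [div_le_div_iff_of_pos_right hpow]
    calc (numPartsLe k m : ℝ) * ((Nat.factorial k : ℝ) * (Nat.factorial r : ℝ))
        = ((numPartsLe k m * Nat.factorial k : ℕ) : ℝ) * (Nat.factorial r : ℝ) := by
          push_cast; ring
      _ ≤ ((m + (C + r)).choose r : ℝ) * (Nat.factorial r : ℝ) := by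
          have := Nat.cast_le (α := ℝ) |>.mpr (hU m)
          exact mul_le_mul_of_nonneg_right this (by positivity)
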